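/- Let G be a finite abelian group and e ∈ F₂[G] with e² = e = ê and support M. Then M contains no element of even order. -/

import Mathlib

private lemma frob_monoidAlgebra {G : Type*} [CommGroup G]
    (e : MonoidAlgebra (ZMod 2) G) :
    (e * e).coeff = Finsupp.mapDomain (fun x : G => x * x) e.coeff := by
  have hchar : ∀ x : MonoidAlgebra (ZMod 2) G, x + x = 0 := by
    intro x
    rw [← two_smul (ZMod 2) x]
    have h2 : (2 : ZMod 2) = 0 := by decide
    rw [h2, zero_smul]
  induction e using MonoidAlgebra.induction with
  | zero => simp [Finsupp.mapDomain_zero]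
  | single_add g r f hg hr ih =>
    have hrr : ∀ s : ZMod 2, s * s = s := by decide
    rw [MonoidAlgebra.coeff_add, MonoidAlgebra.coeff_single, Finsupp.mapDomain_add,
      Finsupp.mapDomain_single, ← ih, ← MonoidAlgebra.coeff_single, ← MonoidAlgebra.coeff_add]
    congr 1
    rw [add_mul, mul_add, mul_add, MonoidAlgebra.single_mul_single, hrr,
      mul_comm (G := MonoidAlgebra (ZMod 2) G) f (MonoidAlgebra.single g r)]
    have hz := hchar (MonoidAlgebra.single g r * (show MonoidAlgebra (ZMod 2) G from f))
    linear_combination hz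

theorem support_no_even_order_of_abelian_lcd_idempotent {G : Type*} [CommGroup G]
    [Fintype G] (e : MonoidAlgebra (ZMod 2) G)
    (hidem : e * e = e)
    (hadj : Finsupp.mapDomain (fun g : G => g⁻¹) e.coeff = e.coeff) :
    ∀ g ∈ e.coeff.support, ¬ Even (orderOf g) := by
  classical
  intro g hg heven
  set F : G → G := fun x => x * x with hF
  have frob := frob_monoidAlgebra e
  have hsupp : e.coeff.support = e.coeff.support.image F := by
    apply Finset.eq_of_subset_of_card_le
    · intro x hx
      have hx' : x ∈ (Finsupp.mapDomain F e.coeff).support := by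
        rw [← frob, hidem]; exact hx
      exact Finsupp.mapDomain_support hx'
    · exact Finset.card_image_le
  have hinj : Set.InjOn F e.coeff.support :=
    Finset.injOn_of_card_image_eq (by rw [← hsupp])
  have hmaps : ∀ x ∈ e.coeff.support, F x ∈ e.coeff.support := by
    intro x hx
    rw [hsupp]
    exact Finset.mem_image_of_mem F hx
  have hiter : ∀ k, F^[k] g ∈ e.coeff.support := by
    intro k
    induction k with
    | zero => simpa using hg
    | succ n ih => rw [Function.iterate_succ_apply']; exact hmaps _ ih
  obtain ⟨k, l, hne, heq⟩ : ∃ k l : ℕ, k ≠ l ∧ F^[k] g = F^[l] g := by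
    obtain ⟨k, l, hne, heq⟩ :=
      Finite.exists_ne_map_eq_of_infinite (fun k : ℕ => F^[k] g)
    exact ⟨k, l, hne, heq⟩
  have cancel : ∀ k d : ℕ, F^[k + d] g = F^[k] g → F^[d] g = g := by
    intro k
    induction k with
    | zero => intro d h; simpa using h
    | succ n ih =>
      intro d h
      apply ih
      apply hinj (hiter _) (hiter _)
      have h' : F (F^[n + d] g) = F (F^[n] g) := by
        rw [← Function.iterate_succ_apply' F (n + d) g,
          ← Function.iterate_succ_apply' F n g]
        show F^[n + d + 1] g = F^[n + 1] g
        rw [show n + d + 1 = n + 1 + d by ring]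
        exact h
      exact h'
  obtain ⟨d, hd1, hfix⟩ : ∃ d : ℕ, 1 ≤ d ∧ F^[d] g = g := by
    rcases lt_or_gt_of_ne hne with h | h
    · refine ⟨l - k, by omega, cancel k (l - k) ?_⟩
      rw [show k + (l - k) = l by omega]; exact heq.symm
    · refine ⟨k - l, by omega, cancel l (k - l) ?_⟩
      rw [show l + (k - l) = k by omega]; exact heq
  have hpow : ∀ (n : ℕ) (x : G), F^[n] x = x ^ (2 ^ n) := by
    intro n
    induction n with
    | zero => intro x; simp
    | succ m ih =>
      intro x
      rw [Function.iterate_succ_apply', ih]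
      simp [hF, pow_succ, pow_mul, sq]
  rw [hpow] at hfix
  have h1 : g ^ (2 ^ d - 1) = 1 := by
    apply mul_right_cancel (b := g)
    rw [one_mul, ← pow_succ,
      show 2 ^ d - 1 + 1 = 2 ^ d by have := Nat.one_le_two_pow (n := d); omega]
    exact hfix
  have hdvd : orderOf g ∣ 2 ^ d - 1 := orderOf_dvd_of_pow_eq_one h1
  have hodd : Odd (2 ^ d - 1) := by
    have hev : Even (2 ^ d) := (Nat.even_pow).mpr ⟨even_two, by omega⟩
    exact Nat.Even.sub_odd Nat.one_le_two_pow hev odd_one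
  have h2 : (2 : ℕ) ∣ 2 ^ d - 1 := dvd_trans heven.two_dvd hdvd
  rw [Nat.odd_iff] at hodd
  omega
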